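/- For δ > β > 0 and α = 1, the quadratic βδ²x² − 2δ(δ+β)x + 2(δ+β) = 0 has two distinct positive roots x₁ = (δ+β−√(δ²−β²))/(βδ) < x₂ = (δ+β+√(δ²−β²))/(βδ), and the BGamma density decreases on (0,x₁), increases on (x₁,x₂), and decreases on (x₂,∞). -/

import Mathlib

open MeasureTheory Real Set

noncomputable def Zc (α β δ : ℝ) : ℝ := 2 + (α * δ / β) * ((1 + α) * δ / β - 2)

noncomputable def bgammaPDF (α β δ x : ℝ) : ℝ :=
  (1 + (1 - δ * x) ^ 2) / Zc α β δ * (β ^ α / Real.Gamma α) * x ^ (α - 1) * Real.exp (-β * x)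

noncomputable def gammaPDF (α β x : ℝ) : ℝ :=
  β ^ α / Real.Gamma α * x ^ (α - 1) * Real.exp (-β * x)

lemma bgamma_eq (β δ : ℝ) :
    bgammaPDF 1 β δ = fun x => (β / Zc 1 β δ) * ((1 + (1 - δ * x) ^ 2) * Real.exp (-β * x)) := by
  funext x
  unfold bgammaPDF
  rw [Real.Gamma_one, Real.rpow_one]
  norm_num [Real.rpow_zero]
  ring

lemma Zc_pos (β δ : ℝ) (hβ : 0 < β) : 0 < Zc 1 β δ := by
  have h : Zc 1 β δ = (2 * β ^ 2 + 2 * δ ^ 2 - 2 * δ * β) / β ^ 2 := by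
    unfold Zc; field_simp; ring
  rw [h]
  apply div_pos _ (by positivity)
  nlinarith [sq_nonneg (β - δ), sq_nonneg β, sq_nonneg δ]

lemma gderiv (β δ C x : ℝ) :
    HasDerivAt (fun x => C * ((1 + (1 - δ * x) ^ 2) * Real.exp (-β * x)))
      (C * (Real.exp (-β * x) *
        (-(β * δ ^ 2 * x ^ 2 - 2 * δ * (δ + β) * x + 2 * (δ + β))))) x := by
  have h1 : HasDerivAt (fun x : ℝ => 1 - δ * x) (-δ) x := by
    simpa using ((hasDerivAt_id x).const_mul δ).const_sub 1
  have h2 : HasDerivAt (fun x : ℝ => 1 + (1 - δ * x) ^ 2)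
      (2 * (1 - δ * x) ^ 1 * (-δ)) x := (h1.pow 2).const_add 1
  have h3 : HasDerivAt (fun x : ℝ => Real.exp (-β * x)) (Real.exp (-β * x) * (-β)) x :=
    by simpa using ((hasDerivAt_id x).const_mul (-β)).exp
  have h4 : HasDerivAt (fun x => C * ((1 + (1 - δ * x) ^ 2) * Real.exp (-β * x)))
      (C * (2 * (1 - δ * x) ^ 1 * (-δ) * Real.exp (-β * x) +
        (1 + (1 - δ * x) ^ 2) * (Real.exp (-β * x) * (-β)))) x := (h2.mul h3).const_mul C
  convert h4 using 1
  ring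

theorem bgamma_bimodal_shape_alpha_one (β δ : ℝ) (hβ : 0 < β) (hδ : β < δ) :
    let x₁ := (δ + β - Real.sqrt (δ ^ 2 - β ^ 2)) / (β * δ)
    let x₂ := (δ + β + Real.sqrt (δ ^ 2 - β ^ 2)) / (β * δ)
    0 < x₁ ∧ x₁ < x₂ ∧
    β * δ ^ 2 * x₁ ^ 2 - 2 * δ * (δ + β) * x₁ + 2 * (δ + β) = 0 ∧
    β * δ ^ 2 * x₂ ^ 2 - 2 * δ * (δ + β) * x₂ + 2 * (δ + β) = 0 ∧
    StrictAntiOn (bgammaPDF 1 β δ) (Ioo 0 x₁) ∧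
    StrictMonoOn (bgammaPDF 1 β δ) (Ioo x₁ x₂) ∧
    StrictAntiOn (bgammaPDF 1 β δ) (Ici x₂) := by
  intro x₁ x₂
  have hd : (0:ℝ) < δ := hβ.trans hδ
  have hsub : 0 < δ ^ 2 - β ^ 2 := by nlinarith
  set s := Real.sqrt (δ ^ 2 - β ^ 2) with hs
  have hs2 : s ^ 2 = δ ^ 2 - β ^ 2 := Real.sq_sqrt hsub.le
  have hspos : 0 < s := Real.sqrt_pos.mpr hsub
  have hslt : s < δ + β := by nlinarith
  have hbd : 0 < β * δ := mul_pos hβ hd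
  have hx1 : x₁ = (δ + β - s) / (β * δ) := rfl
  have hx2 : x₂ = (δ + β + s) / (β * δ) := rfl
  have p0 : 0 < x₁ := by rw [hx1]; exact div_pos (by linarith) hbd
  have p1 : x₁ < x₂ := by
    rw [hx1, hx2]
    exact (div_lt_div_iff_of_pos_right hbd).mpr (by linarith)
  have r1 : β * δ ^ 2 * x₁ ^ 2 - 2 * δ * (δ + β) * x₁ + 2 * (δ + β) = 0 := by
    rw [hx1]; field_simp; linear_combination hs2
  have r2 : β * δ ^ 2 * x₂ ^ 2 - 2 * δ * (δ + β) * x₂ + 2 * (δ + β) = 0 := by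
    rw [hx2]; field_simp; linear_combination hs2
  have fac : ∀ x : ℝ, β * δ ^ 2 * x ^ 2 - 2 * δ * (δ + β) * x + 2 * (δ + β)
      = β * δ ^ 2 * (x - x₁) * (x - x₂) := by
    intro x
    rw [hx1, hx2]; field_simp; linear_combination hs2
  set C := β / Zc 1 β δ with hC
  have hCpos : 0 < C := div_pos hβ (Zc_pos β δ hβ)
  have hEq := bgamma_eq β δ
  rw [hEq]
  set g : ℝ → ℝ := fun x => C * ((1 + (1 - δ * x) ^ 2) * Real.exp (-β * x)) with hg
  have hcont : Continuous g := by fun_prop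
  have hderiv : ∀ x : ℝ, deriv g x = C * (Real.exp (-β * x) *
      (-(β * δ ^ 2 * x ^ 2 - 2 * δ * (δ + β) * x + 2 * (δ + β)))) :=
    fun x => (gderiv β δ C x).deriv
  refine ⟨p0, p1, r1, r2, ?_, ?_, ?_⟩
  · apply strictAntiOn_of_deriv_neg (convex_Ioo _ _) hcont.continuousOn
    intro x hx
    rw [interior_Ioo] at hx
    rw [hderiv x, fac x]
    have h1 : x - x₁ < 0 := by linarith [hx.2]
    have h2 : x - x₂ < 0 := by linarith [hx.2, p1]
    have hQ : 0 < β * δ ^ 2 * (x - x₁) * (x - x₂) :=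
      mul_pos_of_neg_of_neg (mul_neg_of_pos_of_neg (by positivity) h1) h2
    exact mul_neg_of_pos_of_neg hCpos (mul_neg_of_pos_of_neg (Real.exp_pos _) (by linarith))
  · apply strictMonoOn_of_deriv_pos (convex_Ioo _ _) hcont.continuousOn
    intro x hx
    rw [interior_Ioo] at hx
    rw [hderiv x, fac x]
    have h1 : 0 < x - x₁ := by linarith [hx.1]
    have h2 : x - x₂ < 0 := by linarith [hx.2]
    have hQ : β * δ ^ 2 * (x - x₁) * (x - x₂) < 0 :=
      mul_neg_of_pos_of_neg (mul_pos (by positivity) h1) h2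
    exact mul_pos hCpos (mul_pos (Real.exp_pos _) (by linarith))
  · apply strictAntiOn_of_deriv_neg (convex_Ici _) hcont.continuousOn
    intro x hx
    rw [interior_Ici] at hx
    rw [hderiv x, fac x]
    have h1 : 0 < x - x₁ := by have := hx.out; linarith
    have h2 : 0 < x - x₂ := by have := hx.out; linarith
    have hQ : 0 < β * δ ^ 2 * (x - x₁) * (x - x₂) := by positivity
    exact mul_neg_of_pos_of_neg hCpos (mul_neg_of_pos_of_neg (Real.exp_pos _) (by linarith))
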